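/- Let E be a complex Hilbert space, U a unitary operator on E and P an orthogonal projection on E. Then the map W_Φ on ℓ²(ℕ, E) defined by (W_Φ f)(0) = P U* f(0) and (W_Φ f)(n) = P U* f(n) + (I−P) U* f(n−1) for n ≥ 1 is a well-defined bounded linear operator and is an isometry; likewise the map W_Ψ defined by (W_Ψ f)(0) = U(I−P) f(0) and (W_Ψ f)(n) = U(I−P) f(n) + U P f(n−1) for n ≥ 1 is an isometry on ℓ²(ℕ, E). -/

import Mathlib

open ContinuousLinearMap
open scoped ENNReal

set_option linter.unusedSectionVars false

set_option maxRecDepth 10000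

noncomputable section

/-- `W` is the analytic (degree-one) Toeplitz operator on `ℓ²(ℕ, E)` with symbol
`φ(z) = a + z b`, i.e. `(W f)(0) = a (f 0)` and `(W f)(n) = a (f n) + b (f (n-1))`
for `n ≥ 1`. -/
def IsToeplitz {E : Type*} [NormedAddCommGroup E] [InnerProductSpace ℂ E]
    (a b : E →L[ℂ] E)
    (W : lp (fun _ : ℕ => E) 2 →L[ℂ] lp (fun _ : ℕ => E) 2) : Prop :=
  ∀ f : lp (fun _ : ℕ => E) 2,
    (W f : ∀ _ : ℕ, E) 0 = a ((f : ∀ _ : ℕ, E) 0) ∧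
    ∀ n : ℕ, (W f : ∀ _ : ℕ, E) (n + 1) =
      a ((f : ∀ _ : ℕ, E) (n + 1)) + b ((f : ∀ _ : ℕ, E) n)

section Aux

variable {E : Type*} [NormedAddCommGroup E] [InnerProductSpace ℂ E]

/-- shift: (shiftSeq f) 0 = 0, (shiftSeq f) (n+1) = f n -/
def shiftSeq (f : ℕ → E) : ℕ → E := fun n => Nat.casesOn n 0 (fun k => f k)

@[simp] lemma shiftSeq_zero (f : ℕ → E) : shiftSeq f 0 = 0 := rfl
@[simp] lemma shiftSeq_succ (f : ℕ → E) (n : ℕ) : shiftSeq f (n + 1) = f n := rfl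

def Wfun (a b : E →L[ℂ] E) (f : ℕ → E) : ℕ → E :=
  fun n => a (f n) + b (shiftSeq f n)

lemma Wfun_add (a b : E →L[ℂ] E) (f g : ℕ → E) :
    Wfun a b (f + g) = Wfun a b f + Wfun a b g := by
  funext n
  cases n with
  | zero =>
    show a (f 0 + g 0) + b 0 = (a (f 0) + b 0) + (a (g 0) + b 0)
    rw [map_add, map_zero]
    abel
  | succ k =>
    show a (f (k + 1) + g (k + 1)) + b (f k + g k)
      = (a (f (k + 1)) + b (f k)) + (a (g (k + 1)) + b (g k))
    rw [map_add, map_add]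
    abel

lemma Wfun_smul (a b : E →L[ℂ] E) (c : ℂ) (f : ℕ → E) :
    Wfun a b (c • f) = c • Wfun a b f := by
  funext n
  cases n with
  | zero =>
    show a (c • f 0) + b 0 = c • (a (f 0) + b 0)
    rw [map_smul, map_zero, smul_add, smul_zero]
  | succ k =>
    show a (c • f (k + 1)) + b (c • f k) = c • (a (f (k + 1)) + b (f k))
    rw [map_smul, map_smul, smul_add]

lemma two_toReal : ((2 : ℝ≥0∞)).toReal = (2 : ℝ) := by norm_num

lemma key_norm (a b : E →L[ℂ] E)
    (horth : ∀ x y : E, ‖a x + b y‖ ^ 2 = ‖a x‖ ^ 2 + ‖b y‖ ^ 2)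
    (f : ℕ → E) (n : ℕ) :
    ‖Wfun a b f n‖ ^ 2 = ‖a (f n)‖ ^ 2 + ‖b (shiftSeq f n)‖ ^ 2 :=
  horth _ _

lemma summable_comp (c : E →L[ℂ] E) {f : ℕ → E}
    (hf : Summable fun n => ‖f n‖ ^ 2) : Summable fun n => ‖c (f n)‖ ^ 2 := by
  have hg : Summable fun n => ‖c‖ ^ 2 * ‖f n‖ ^ 2 := hf.mul_left _
  refine hg.of_nonneg_of_le (fun n => by positivity) fun n => ?_
  calc ‖c (f n)‖ ^ 2 ≤ (‖c‖ * ‖f n‖) ^ 2 := by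
        apply pow_le_pow_left₀ (norm_nonneg _) (c.le_opNorm _)
    _ = ‖c‖ ^ 2 * ‖f n‖ ^ 2 := by ring

lemma summable_shift (c : E →L[ℂ] E) {f : ℕ → E}
    (hf : Summable fun n => ‖f n‖ ^ 2) :
    Summable fun n => ‖c (shiftSeq f n)‖ ^ 2 := by
  apply (_root_.summable_nat_add_iff 1).mp
  simpa using summable_comp c hf

lemma tsum_shift (c : E →L[ℂ] E) {f : ℕ → E}
    (hf : Summable fun n => ‖f n‖ ^ 2) :
    ∑' n, ‖c (shiftSeq f n)‖ ^ 2 = ∑' n, ‖c (f n)‖ ^ 2 := by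
  rw [Summable.tsum_eq_zero_add (summable_shift c hf)]
  simp

/-- The main abstract lemma. -/
lemma toeplitz_isometry (a b : E →L[ℂ] E)
    (horth : ∀ x y : E, ‖a x + b y‖ ^ 2 = ‖a x‖ ^ 2 + ‖b y‖ ^ 2)
    (hsum : ∀ x : E, ‖a x‖ ^ 2 + ‖b x‖ ^ 2 = ‖x‖ ^ 2) :
    ∃ W : lp (fun _ : ℕ => E) 2 →L[ℂ] lp (fun _ : ℕ => E) 2,
      IsToeplitz a b W ∧ Isometry W := by
  have hp : (0:ℝ) < ((2 : ℝ≥0∞)).toReal := by norm_num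
  -- summability of f itself
  have hsf : ∀ f : lp (fun _ : ℕ => E) 2, Summable fun n => ‖(f : ∀ _ : ℕ, E) n‖ ^ 2 := by
    intro f
    have h := (lp.memℓp f).summable hp
    rw [show ((2 : ℝ≥0∞)).toReal = ((2 : ℕ) : ℝ) by norm_num] at h
    simpa [Real.rpow_natCast] using h
  have hsW : ∀ f : lp (fun _ : ℕ => E) 2,
      Summable fun n => ‖Wfun a b (f : ∀ _ : ℕ, E) n‖ ^ 2 := by
    intro f
    have h1 := summable_comp a (hsf f)
    have h2 := summable_shift b (hsf f)
    have := h1.add h2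
    apply this.congr
    intro n
    exact (key_norm a b horth _ n).symm
  have hmem : ∀ f : lp (fun _ : ℕ => E) 2, Memℓp (Wfun a b (f : ∀ _ : ℕ, E)) 2 := by
    intro f
    apply memℓp_gen
    rw [show ((2 : ℝ≥0∞)).toReal = ((2 : ℕ) : ℝ) by norm_num]
    simpa [Real.rpow_natCast] using hsW f
  -- tsum equality
  have htsum : ∀ f : lp (fun _ : ℕ => E) 2,
      ∑' n, ‖Wfun a b (f : ∀ _ : ℕ, E) n‖ ^ 2 = ∑' n, ‖(f : ∀ _ : ℕ, E) n‖ ^ 2 := by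
    intro f
    set g : ℕ → E := (f : ∀ _ : ℕ, E)
    calc ∑' n, ‖Wfun a b g n‖ ^ 2
        = ∑' n, (‖a (g n)‖ ^ 2 + ‖b (shiftSeq g n)‖ ^ 2) := by
          exact tsum_congr fun n => key_norm a b horth g n
      _ = (∑' n, ‖a (g n)‖ ^ 2) + ∑' n, ‖b (shiftSeq g n)‖ ^ 2 :=
          Summable.tsum_add (summable_comp a (hsf f)) (summable_shift b (hsf f))
      _ = (∑' n, ‖a (g n)‖ ^ 2) + ∑' n, ‖b (g n)‖ ^ 2 := by
          rw [tsum_shift b (hsf f)]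
      _ = ∑' n, (‖a (g n)‖ ^ 2 + ‖b (g n)‖ ^ 2) :=
          (Summable.tsum_add (summable_comp a (hsf f)) (summable_comp b (hsf f))).symm
      _ = ∑' n, ‖g n‖ ^ 2 := tsum_congr fun n => hsum _
  -- define the linear map
  let Wl : lp (fun _ : ℕ => E) 2 →ₗ[ℂ] lp (fun _ : ℕ => E) 2 :=
    { toFun := fun f => ⟨Wfun a b (f : ∀ _ : ℕ, E), hmem f⟩
      map_add' := by
        intro f g
        apply lp.ext
        show Wfun a b (↑(f + g)) = Wfun a b ↑f + Wfun a b ↑g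
        have hfg : ((f + g : lp (fun _ : ℕ => E) 2) : ∀ _ : ℕ, E)
            = (f : ∀ _ : ℕ, E) + (g : ∀ _ : ℕ, E) := rfl
        rw [hfg]
        exact Wfun_add a b _ _
      map_smul' := by
        intro c f
        apply lp.ext
        show Wfun a b (↑(c • f)) = c • Wfun a b ↑f
        have hcf : ((c • f : lp (fun _ : ℕ => E) 2) : ∀ _ : ℕ, E)
            = c • (f : ∀ _ : ℕ, E) := rfl
        rw [hcf]
        exact Wfun_smul a b c _ }
  -- norm preserving
  have hnorm : ∀ f : lp (fun _ : ℕ => E) 2, ‖Wl f‖ = ‖f‖ := by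
    intro f
    have h1 : ‖Wl f‖ ^ ((2:ℝ≥0∞)).toReal = ∑' n, ‖(Wl f : ∀ _ : ℕ, E) n‖ ^ ((2:ℝ≥0∞)).toReal :=
      lp.norm_rpow_eq_tsum hp _
    have h2 : ‖f‖ ^ ((2:ℝ≥0∞)).toReal = ∑' n, ‖(f : ∀ _ : ℕ, E) n‖ ^ ((2:ℝ≥0∞)).toReal :=
      lp.norm_rpow_eq_tsum hp _
    have hWlf : (Wl f : ∀ _ : ℕ, E) = Wfun a b (f : ∀ _ : ℕ, E) := rfl
    rw [hWlf] at h1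
    have key : ‖Wl f‖ ^ ((2:ℝ≥0∞)).toReal = ‖f‖ ^ ((2:ℝ≥0∞)).toReal := by
      rw [h1, h2]
      rw [show ((2:ℝ≥0∞)).toReal = ((2:ℕ):ℝ) by norm_num]
      simp only [Real.rpow_natCast]
      exact htsum f
    have h2' : ‖Wl f‖ ^ (2:ℝ) = ‖f‖ ^ (2:ℝ) := by
      rwa [two_toReal] at key
    rw [Real.rpow_two, Real.rpow_two] at h2'
    nlinarith [norm_nonneg (Wl f), norm_nonneg f, sq_nonneg (‖Wl f‖ - ‖f‖),
      sq_nonneg (‖Wl f‖ + ‖f‖)]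
  let W : lp (fun _ : ℕ => E) 2 →L[ℂ] lp (fun _ : ℕ => E) 2 :=
    Wl.mkContinuous 1 (fun f => by rw [hnorm f, one_mul])
  refine ⟨W, ?_, ?_⟩
  · intro f
    constructor
    · show Wfun a b (f : ∀ _ : ℕ, E) 0 = _
      simp [Wfun]
    · intro n
      show Wfun a b (f : ∀ _ : ℕ, E) (n + 1) = _
      simp [Wfun]
  · exact AddMonoidHomClass.isometry_of_norm W hnorm

end Aux

/-- For a unitary `U` and an orthogonal projection `P` on a complex Hilbert space `E`,
the multiplication operator `W_Φ` on `ℓ²(ℕ, E)` with symbol `Φ(z) = (P + z(I−P)) U*`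
(i.e. `(W_Φ f)(0) = P U* f(0)`, `(W_Φ f)(n) = P U* f(n) + (I−P) U* f(n−1)` for `n ≥ 1`)
is a well-defined bounded operator and an isometry; likewise for `W_Ψ` with symbol
`Ψ(z) = U((I−P) + z P)`. -/
theorem bcl_multipliers_are_isometries
    {E : Type*} [NormedAddCommGroup E] [InnerProductSpace ℂ E] [CompleteSpace E]
    (U P : E →L[ℂ] E)
    (hU₁ : adjoint U * U = 1) (hU₂ : U * adjoint U = 1)
    (hP₁ : IsSelfAdjoint P) (hP₂ : P * P = P) :
    (∃ W : lp (fun _ : ℕ => E) 2 →L[ℂ] lp (fun _ : ℕ => E) 2,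
      IsToeplitz (P ∘L adjoint U) ((1 - P) ∘L adjoint U) W ∧ Isometry W) ∧
    (∃ W : lp (fun _ : ℕ => E) 2 →L[ℂ] lp (fun _ : ℕ => E) 2,
      IsToeplitz (U ∘L (1 - P)) (U ∘L P) W ∧ Isometry W) := by
  -- basic inner-product facts
  have hPadj : adjoint P = P := hP₁
  have hinner_P : ∀ x y : E, inner ℂ (P x) y = (inner ℂ x (P y) : ℂ) := by
    intro x y
    rw [← ContinuousLinearMap.adjoint_inner_left P, hPadj]
  have hPP : ∀ x : E, P (P x) = P x := fun x => by
    have := ContinuousLinearMap.ext_iff.mp hP₂ x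
    simpa [ContinuousLinearMap.mul_apply] using this
  -- ‖P x‖² + ‖(1-P) x‖² = ‖x‖² and orthogonality
  have horthP : ∀ x y : E, (inner ℂ (P x) ((1 - P) y) : ℂ) = 0 := by
    intro x y
    rw [hinner_P]
    have : P ((1 - P) y) = 0 := by
      simp only [ContinuousLinearMap.sub_apply, ContinuousLinearMap.one_apply, map_sub, hPP,
        sub_self]
    rw [this, inner_zero_right]
  have hpyth : ∀ u v : E, (inner ℂ u v : ℂ) = 0 → ‖u + v‖ ^ 2 = ‖u‖ ^ 2 + ‖v‖ ^ 2 :=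
    fun u v h => by
    have := norm_add_sq_eq_norm_sq_add_norm_sq_of_inner_eq_zero u v h
    rw [pow_two, pow_two, pow_two]
    exact this
  have hUinner : ∀ x y : E, (inner ℂ (U x) (U y) : ℂ) = inner ℂ x y := by
    intro x y
    rw [← ContinuousLinearMap.adjoint_inner_left U]
    rw [show (adjoint U) (U x) = x by
      simpa [ContinuousLinearMap.mul_apply] using ContinuousLinearMap.ext_iff.mp hU₁ x]
  have hUstarinner : ∀ x y : E, (inner ℂ (adjoint U x) (adjoint U y) : ℂ) = inner ℂ x y := by
    intro x y
    rw [ContinuousLinearMap.adjoint_inner_left U]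
    rw [show U (adjoint U y) = y by
      have := ContinuousLinearMap.ext_iff.mp hU₂ y
      simpa [ContinuousLinearMap.mul_apply] using this]
  have normeq : ∀ (T : E →L[ℂ] E), (∀ x y : E, (inner ℂ (T x) (T y) : ℂ) = inner ℂ x y) →
      ∀ x : E, ‖T x‖ = ‖x‖ := by
    intro T hT x
    have h := hT x x
    rw [inner_self_eq_norm_sq_to_K, inner_self_eq_norm_sq_to_K] at h
    have h2 : (‖T x‖ : ℝ) ^ 2 = ‖x‖ ^ 2 := by exact_mod_cast h
    nlinarith [norm_nonneg (T x), norm_nonneg x]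
  have hUiso : ∀ x : E, ‖adjoint U x‖ = ‖x‖ := normeq _ hUstarinner
  have hUnorm : ∀ x : E, ‖U x‖ = ‖x‖ := normeq _ hUinner
  have hPsum : ∀ x : E, ‖P x‖ ^ 2 + ‖(1 - P) x‖ ^ 2 = ‖x‖ ^ 2 := by
    intro x
    have h := hpyth (P x) ((1 - P) x) (horthP x x)
    have hx : P x + (1 - P) x = x := by
      simp [ContinuousLinearMap.sub_apply]
    rw [hx] at h
    linarith
  constructor
  · apply toeplitz_isometry
    · intro x y
      apply hpyth
      simp only [ContinuousLinearMap.comp_apply]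
      exact horthP _ _
    · intro x
      simp only [ContinuousLinearMap.comp_apply]
      rw [hPsum (adjoint U x)]
      rw [hUiso x]
  · apply toeplitz_isometry
    · intro x y
      apply hpyth
      simp only [ContinuousLinearMap.comp_apply]
      rw [hUinner]
      have := horthP y x
      rw [← inner_conj_symm] at this
      have h0 : (inner ℂ ((1 - P) x) (P y) : ℂ) = 0 := by
        rw [← inner_conj_symm, horthP, map_zero]
      exact h0
    · intro x
      simp only [ContinuousLinearMap.comp_apply]
      rw [hUnorm ((1 - P) x), hUnorm (P x)]
      linarith [hPsum x]
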